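/- arXiv:1507.02782 — 2 statements merged into one kernel-verified Lean document; each statement's English description precedes it below -/
import Mathlib

section
/- Let H be a closed subgroup of GL(n,ℝ), let U ⊆ ℝⁿ be open and Hᵀ-invariant, and let C ⊆ U be a topological section for U. Then for every relatively compact open neighborhood V ⊆ H of the identity, the set VᵀC := {hᵀc : h ∈ V, c ∈ C} ⊆ U is a topological quasi-section for U. -/
open Matrix Set Topology
open scoped MatrixGroups Pointwise

noncomputable section

variable {n : ℕ}

/-- The transpose action of an element of `GL(n,ℝ)` on `ℝⁿ`: `(h, ξ) ↦ hᵀ ξ`. -/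
def tAct (h : GL (Fin n) ℝ) (v : Fin n → ℝ) : Fin n → ℝ :=
  ((h : Matrix (Fin n) (Fin n) ℝ)ᵀ) *ᵥ v

/-- A set `U ⊆ ℝⁿ` is `Hᵀ`-invariant. -/
def TInvariant (H : Subgroup (GL (Fin n) ℝ)) (U : Set (Fin n → ℝ)) : Prop :=
  ∀ h ∈ H, ∀ v ∈ U, tAct h v ∈ U

/-- `HᵀC = {hᵀ c : h ∈ H, c ∈ C}`. -/
def tOrb (H : Subgroup (GL (Fin n) ℝ)) (C : Set (Fin n → ℝ)) : Set (Fin n → ℝ) :=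
  {v | ∃ h ∈ H, ∃ c ∈ C, tAct h c = v}

/-- `((Y,Z)) = {h ∈ H : hᵀY ∩ Z ≠ ∅}`, as a set of elements of `GL(n,ℝ)`. -/
def meetSet (H : Subgroup (GL (Fin n) ℝ)) (Y Z : Set (Fin n → ℝ)) :
    Set (GL (Fin n) ℝ) :=
  {h | h ∈ H ∧ ∃ y ∈ Y, tAct h y ∈ Z}

/-- `C` is a topological quasi-section for `U`: `C` is open, `HᵀC = U`, and `((C,C))`
is relatively compact. -/
def IsQuasiSection (H : Subgroup (GL (Fin n) ℝ)) (U C : Set (Fin n → ℝ)) : Prop :=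
  IsOpen C ∧ C ⊆ U ∧ tOrb H C = U ∧ IsCompact (closure (meetSet H C C))

/-- `C` is a topological section for `U`: the map `H × C → U, (h,c) ↦ hᵀc` is a
homeomorphism. -/
def IsTopSection (H : Subgroup (GL (Fin n) ℝ)) (U C : Set (Fin n → ℝ)) : Prop :=
  C ⊆ U ∧ ∃ e : (↥H × ↥C) ≃ₜ ↥U,
    ∀ (h : ↥H) (c : ↥C), ((e (h, c) : ↥U) : Fin n → ℝ) = tAct (h : GL (Fin n) ℝ) (c : Fin n → ℝ)


theorem tAct_mul' (f g : GL (Fin n) ℝ) (v : Fin n → ℝ) :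
    tAct (f * g) v = tAct g (tAct f v) := by
  simp [tAct, Matrix.transpose_mul, Matrix.mulVec_mulVec]

theorem tAct_one' (v : Fin n → ℝ) : tAct (1 : GL (Fin n) ℝ) v = v := by
  simp [tAct]

/-- If `C` is a topological section for an open `Hᵀ`-invariant set `U`,
and `V ⊆ H` is a relatively compact open neighborhood of the identity in `H`, then
`VᵀC` is a topological quasi-section for `U`. -/
theorem quasiSection_of_topSection
    (H : Subgroup (GL (Fin n) ℝ)) (hH : IsClosed (H : Set (GL (Fin n) ℝ)))
    (U : Set (Fin n → ℝ)) (hUopen : IsOpen U) (hUinv : TInvariant H U)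
    (C : Set (Fin n → ℝ)) (hC : IsTopSection H U C)
    (V : Set (GL (Fin n) ℝ)) (hVH : V ⊆ (H : Set (GL (Fin n) ℝ)))
    (hVopen : IsOpen ((fun h : ↥H => (h : GL (Fin n) ℝ)) ⁻¹' V))
    (hV1 : (1 : GL (Fin n) ℝ) ∈ V)
    (hVcpt : IsCompact (closure V)) :
    IsQuasiSection H U {v | ∃ h ∈ V, ∃ c ∈ C, tAct h c = v} := by
  obtain ⟨hCU, e, he⟩ := hC
  set D : Set (Fin n → ℝ) := {v | ∃ h ∈ V, ∃ c ∈ C, tAct h c = v} with hD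
  have hDsubU : D ⊆ U := by
    rintro v ⟨h, hv, c, hc, rfl⟩
    exact hUinv h (hVH hv) c (hCU hc)
  refine ⟨?_, hDsubU, ?_, ?_⟩
  · -- openness
    have himg : D = Subtype.val '' (⇑e '' (((fun h : ↥H => (h : GL (Fin n) ℝ)) ⁻¹' V) ×ˢ
        (univ : Set ↥C))) := by
      ext v
      constructor
      · rintro ⟨h, hv, c, hc, rfl⟩
        exact ⟨e (⟨h, hVH hv⟩, ⟨c, hc⟩), ⟨(⟨h, hVH hv⟩, ⟨c, hc⟩), ⟨hv, trivial⟩, rfl⟩,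
          he ⟨h, hVH hv⟩ ⟨c, hc⟩⟩
      · rintro ⟨u, ⟨⟨h, c⟩, ⟨hv, -⟩, rfl⟩, rfl⟩
        exact ⟨h, hv, c, c.2, (he h c).symm⟩
    rw [himg]
    exact hUopen.isOpenMap_subtype_val _ (e.isOpenMap _ (hVopen.prod isOpen_univ))
  · -- tOrb H D = U
    ext u
    constructor
    · rintro ⟨g, hg, w, hw, rfl⟩
      exact hUinv g hg w (hDsubU hw)
    · intro hu
      obtain ⟨⟨h, c⟩, hec⟩ := e.surjective ⟨u, hu⟩
      have : tAct (h : GL (Fin n) ℝ) (c : Fin n → ℝ) = u := by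
        rw [← he h c, hec]
      exact ⟨h, h.2, c, ⟨1, hV1, c, c.2, tAct_one' _⟩, this⟩
  · -- relative compactness of ((D,D))
    have hsub : meetSet H D D ⊆ (closure V)⁻¹ * closure V := by
      rintro h ⟨hhH, y, ⟨v1, hv1, c1, hc1, rfl⟩, v2, hv2, c2, hc2, heq⟩
      have key : tAct ((v1 : GL (Fin n) ℝ) * h) c1 = tAct v2 c2 := by
        rw [tAct_mul']; exact heq.symm
      have hE : e (⟨v1 * h, mul_mem (hVH hv1) hhH⟩, ⟨c1, hc1⟩)
          = e (⟨v2, hVH hv2⟩, ⟨c2, hc2⟩) := by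
        apply Subtype.ext
        rw [he, he]
        exact key
      have hpair := e.injective hE
      have h1 : (v1 : GL (Fin n) ℝ) * h = v2 := congrArg (fun p => ((p.1 : ↥H) : GL (Fin n) ℝ)) hpair
      have : h = v1⁻¹ * v2 := by
        rw [← h1]; group
      rw [this]
      exact Set.mul_mem_mul (Set.inv_mem_inv.mpr (subset_closure hv1)) (subset_closure hv2)
    have hKcpt : IsCompact ((closure V)⁻¹ * closure V) := hVcpt.inv.mul hVcpt
    exact hKcpt.of_isClosed_subset isClosed_closure
      (closure_minimal hsub hKcpt.isClosed)
end
end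

section
/- Let A, X ∈ M₃(ℝ) be commuting lower triangular matrices, with all diagonal entries of A equal to 1 and X strictly lower triangular, and let the group H = {exp(sA + tX) : s,t ∈ ℝ} act on ℝ³ by matrix multiplication. Define Ω₂ = {v ∈ ℝ³ : (Xv)₂ ≠ 0} and Ω₃ = {v ∈ ℝ³ : (Xv)₂ = 0 and (Xv)₃ ≠ 0}. Then Ω₂ and Ω₃ are H-invariant, and for b ∈ {2,3}, whenever Ω_b is nonempty, the set Σ_b = {v ∈ Ω_b : v_b = 0 and |(Xv)_b| = 1} is a topological section for the H-action on Ω_b. -/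
open Matrix Set Topology

noncomputable section

/-- The element `exp(sA + tX)` of the group `H = {exp(sA+tX) : s,t ∈ ℝ}`. -/
def hEl (A X : Matrix (Fin 3) (Fin 3) ℝ) (p : ℝ × ℝ) : Matrix (Fin 3) (Fin 3) ℝ :=
  NormedSpace.exp (p.1 • A + p.2 • X)

/-- `Ω₂ = {v ∈ ℝ³ : (Xv)₂ ≠ 0}`. -/
def Om2 (X : Matrix (Fin 3) (Fin 3) ℝ) : Set (Fin 3 → ℝ) := {v | (X *ᵥ v) 1 ≠ 0}

/-- `Ω₃ = {v ∈ ℝ³ : (Xv)₂ = 0 and (Xv)₃ ≠ 0}`. -/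
def Om3 (X : Matrix (Fin 3) (Fin 3) ℝ) : Set (Fin 3 → ℝ) :=
  {v | (X *ᵥ v) 1 = 0 ∧ (X *ᵥ v) 2 ≠ 0}

/-- `Σ₂ = {v ∈ Ω₂ : v₂ = 0 and |(Xv)₂| = 1}`. -/
def Sig2 (X : Matrix (Fin 3) (Fin 3) ℝ) : Set (Fin 3 → ℝ) :=
  {v | v ∈ Om2 X ∧ v 1 = 0 ∧ |(X *ᵥ v) 1| = 1}

/-- `Σ₃ = {v ∈ Ω₃ : v₃ = 0 and |(Xv)₃| = 1}`. -/
def Sig3 (X : Matrix (Fin 3) (Fin 3) ℝ) : Set (Fin 3 → ℝ) :=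
  {v | v ∈ Om3 X ∧ v 2 = 0 ∧ |(X *ᵥ v) 2| = 1}

lemma exp_nilp3 (M : Matrix (Fin 3) (Fin 3) ℝ) (h : M ^ 3 = 0) :
    NormedSpace.exp M = 1 + M + (2⁻¹ : ℝ) • M ^ 2 := by
  letI : SeminormedRing (Matrix (Fin 3) (Fin 3) ℝ) := Matrix.linftyOpSemiNormedRing
  letI : NormedRing (Matrix (Fin 3) (Fin 3) ℝ) := Matrix.linftyOpNormedRing
  letI : NormedAlgebra ℝ (Matrix (Fin 3) (Fin 3) ℝ) := Matrix.linftyOpNormedAlgebra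
  rw [NormedSpace.exp_eq_tsum ℝ]
  dsimp only
  rw [tsum_eq_sum (s := Finset.range 3) (by
    intro n hn
    simp only [Finset.mem_range, not_lt] at hn
    have : M ^ n = 0 := pow_eq_zero_of_le hn h
    simp [this])]
  simp [Finset.sum_range_succ, Nat.factorial]

lemma exp_smul_one' (s : ℝ) :
    NormedSpace.exp (s • (1 : Matrix (Fin 3) (Fin 3) ℝ))
      = Real.exp s • (1 : Matrix (Fin 3) (Fin 3) ℝ) := by
  letI : SeminormedRing (Matrix (Fin 3) (Fin 3) ℝ) := Matrix.linftyOpSemiNormedRing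
  letI : NormedRing (Matrix (Fin 3) (Fin 3) ℝ) := Matrix.linftyOpNormedRing
  letI : NormedAlgebra ℝ (Matrix (Fin 3) (Fin 3) ℝ) := Matrix.linftyOpNormedAlgebra
  rw [← Algebra.algebraMap_eq_smul_one]
  erw [← NormedSpace.algebraMap_exp_comm]
  rw [Real.exp_eq_exp_ℝ, Algebra.algebraMap_eq_smul_one]

def gMat (A X : Matrix (Fin 3) (Fin 3) ℝ) (s t : ℝ) : Matrix (Fin 3) (Fin 3) ℝ :=
  Real.exp s • !![1, 0, 0;
    s*A 1 0 + t*X 1 0, 1, 0;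
    s*A 2 0 + t*X 2 0 + (s*A 1 0 + t*X 1 0)*(s*A 2 1 + t*X 2 1)/2, s*A 2 1 + t*X 2 1, 1]

lemma hEl_eq (A X : Matrix (Fin 3) (Fin 3) ℝ)
    (hAlow : ∀ i j : Fin 3, i < j → A i j = 0) (hAdiag : ∀ i : Fin 3, A i i = 1)
    (hXlow : ∀ i j : Fin 3, i ≤ j → X i j = 0) (s t : ℝ) :
    hEl A X (s, t) = gMat A X s t := by
  set M : Matrix (Fin 3) (Fin 3) ℝ :=
    !![0, 0, 0; s*A 1 0 + t*X 1 0, 0, 0; s*A 2 0 + t*X 2 0, s*A 2 1 + t*X 2 1, 0] with hM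
  have hdecomp : s • A + t • X = s • (1 : Matrix (Fin 3) (Fin 3) ℝ) + M := by
    ext i j
    fin_cases i <;> fin_cases j <;>
      simp [hM, hAdiag, hAlow 0 1 (by decide), hAlow 0 2 (by decide), hAlow 1 2 (by decide),
        hXlow 0 0 (by decide), hXlow 0 1 (by decide), hXlow 0 2 (by decide),
        hXlow 1 1 (by decide), hXlow 1 2 (by decide), hXlow 2 2 (by decide),
        Matrix.one_apply, Matrix.vecHead, Matrix.vecTail]
  have hM2 : M ^ 2 = !![0,0,0; 0,0,0; (s*A 2 1 + t*X 2 1)*(s*A 1 0 + t*X 1 0), 0, 0] := by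
    rw [pow_two, hM, Matrix.mul_fin_three]
    norm_num
  have hM3 : M ^ 3 = 0 := by
    rw [pow_succ, hM2, hM, Matrix.mul_fin_three]
    norm_num
    ext i j; fin_cases i <;> fin_cases j <;> rfl
  rw [hEl]
  simp only
  rw [hdecomp]
  have hadd : NormedSpace.exp (s • (1 : Matrix (Fin 3) (Fin 3) ℝ) + M)
      = NormedSpace.exp (s • (1 : Matrix (Fin 3) (Fin 3) ℝ)) * NormedSpace.exp M :=
    Matrix.exp_add_of_commute _ _ ((Commute.one_left M).smul_left s)
  rw [hadd, exp_smul_one', exp_nilp3 M hM3, hM2, gMat]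
  ext i j
  fin_cases i <;> fin_cases j <;>
    simp [hM, Matrix.one_apply, Matrix.smul_apply, Matrix.add_apply, Matrix.mul_apply,
      Fin.sum_univ_three] <;> ring

def gAct (A X : Matrix (Fin 3) (Fin 3) ℝ) (s t : ℝ) (u : Fin 3 → ℝ) : Fin 3 → ℝ :=
  ![Real.exp s * u 0,
    Real.exp s * ((s*A 1 0 + t*X 1 0) * u 0 + u 1),
    Real.exp s * ((s*A 2 0 + t*X 2 0 + (s*A 1 0 + t*X 1 0)*(s*A 2 1 + t*X 2 1)/2) * u 0
      + (s*A 2 1 + t*X 2 1) * u 1 + u 2)]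

def gInv (A X : Matrix (Fin 3) (Fin 3) ℝ) (s t : ℝ) (w : Fin 3 → ℝ) : Fin 3 → ℝ :=
  ![w 0 / Real.exp s,
    (-((s*A 1 0 + t*X 1 0) * w 0) + w 1) / Real.exp s,
    (((s*A 1 0 + t*X 1 0)*(s*A 2 1 + t*X 2 1)/2 - (s*A 2 0 + t*X 2 0)) * w 0
      - (s*A 2 1 + t*X 2 1) * w 1 + w 2) / Real.exp s]

lemma gMat_mulVec (A X : Matrix (Fin 3) (Fin 3) ℝ) (s t : ℝ) (u : Fin 3 → ℝ) :
    gMat A X s t *ᵥ u = gAct A X s t u := by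
  funext i
  fin_cases i <;>
    simp [gMat, gAct, mulVec, dotProduct, Fin.sum_univ_three] <;> ring

lemma gAct_eq (A X : Matrix (Fin 3) (Fin 3) ℝ)
    (hAlow : ∀ i j : Fin 3, i < j → A i j = 0) (hAdiag : ∀ i : Fin 3, A i i = 1)
    (hXlow : ∀ i j : Fin 3, i ≤ j → X i j = 0) (p : ℝ × ℝ) (u : Fin 3 → ℝ) :
    hEl A X p *ᵥ u = gAct A X p.1 p.2 u := by
  rw [show p = (p.1, p.2) from rfl, hEl_eq A X hAlow hAdiag hXlow, gMat_mulVec]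

lemma gAct_gInv (A X : Matrix (Fin 3) (Fin 3) ℝ) (s t : ℝ) (w : Fin 3 → ℝ) :
    gAct A X s t (gInv A X s t w) = w := by
  funext i
  have h := Real.exp_ne_zero s
  fin_cases i <;> (simp [gAct, gInv]; try field_simp; try ring)

lemma gInv_gAct (A X : Matrix (Fin 3) (Fin 3) ℝ) (s t : ℝ) (u : Fin 3 → ℝ) :
    gInv A X s t (gAct A X s t u) = u := by
  funext i
  have h := Real.exp_ne_zero s
  fin_cases i <;> (simp [gAct, gInv]; try field_simp; try ring)

lemma gAct_cont (A X : Matrix (Fin 3) (Fin 3) ℝ) :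
    Continuous fun x : (ℝ × ℝ) × (Fin 3 → ℝ) => gAct A X x.1.1 x.1.2 x.2 := by
  refine continuous_pi fun i => ?_
  fin_cases i
  · show Continuous fun x : (ℝ × ℝ) × (Fin 3 → ℝ) => Real.exp x.1.1 * x.2 0
    fun_prop
  · show Continuous fun x : (ℝ × ℝ) × (Fin 3 → ℝ) =>
      Real.exp x.1.1 * ((x.1.1*A 1 0 + x.1.2*X 1 0) * x.2 0 + x.2 1)
    fun_prop
  · show Continuous fun x : (ℝ × ℝ) × (Fin 3 → ℝ) =>
      Real.exp x.1.1 * ((x.1.1*A 2 0 + x.1.2*X 2 0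
        + (x.1.1*A 1 0 + x.1.2*X 1 0)*(x.1.1*A 2 1 + x.1.2*X 2 1)/2) * x.2 0
        + (x.1.1*A 2 1 + x.1.2*X 2 1) * x.2 1 + x.2 2)
    fun_prop

lemma gInv_cont (A X : Matrix (Fin 3) (Fin 3) ℝ) :
    Continuous fun x : (ℝ × ℝ) × (Fin 3 → ℝ) => gInv A X x.1.1 x.1.2 x.2 := by
  refine continuous_pi fun i => ?_
  fin_cases i
  · show Continuous fun x : (ℝ × ℝ) × (Fin 3 → ℝ) => x.2 0 / Real.exp x.1.1
    exact Continuous.div (by fun_prop) (by fun_prop) fun x => Real.exp_ne_zero _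
  · show Continuous fun x : (ℝ × ℝ) × (Fin 3 → ℝ) =>
      (-((x.1.1*A 1 0 + x.1.2*X 1 0) * x.2 0) + x.2 1) / Real.exp x.1.1
    exact Continuous.div (by fun_prop) (by fun_prop) fun x => Real.exp_ne_zero _
  · show Continuous fun x : (ℝ × ℝ) × (Fin 3 → ℝ) =>
      (((x.1.1*A 1 0 + x.1.2*X 1 0)*(x.1.1*A 2 1 + x.1.2*X 2 1)/2
        - (x.1.1*A 2 0 + x.1.2*X 2 0)) * x.2 0
        - (x.1.1*A 2 1 + x.1.2*X 2 1) * x.2 1 + x.2 2) / Real.exp x.1.1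
    exact Continuous.div (by fun_prop) (by fun_prop) fun x => Real.exp_ne_zero _
def sg2s (X : Matrix (Fin 3) (Fin 3) ℝ) (w : Fin 3 → ℝ) : ℝ := Real.log |X 1 0 * w 0|

def sg2t (A X : Matrix (Fin 3) (Fin 3) ℝ) (w : Fin 3 → ℝ) : ℝ :=
  (w 1 - sg2s X w * A 1 0 * w 0) / (X 1 0 * w 0)

def sg3s (X : Matrix (Fin 3) (Fin 3) ℝ) (w : Fin 3 → ℝ) : ℝ :=
  Real.log |X 2 0 * w 0 + X 2 1 * w 1|

def sg3t (A X : Matrix (Fin 3) (Fin 3) ℝ) (w : Fin 3 → ℝ) : ℝ :=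
  (sg3s X w ^ 2 * A 1 0 * A 2 1 * w 0 / 2 - sg3s X w * A 2 0 * w 0 - sg3s X w * A 2 1 * w 1
    + w 2) / (X 2 0 * w 0 + X 2 1 * w 1)

/-- For commuting lower triangular `A, X` with `diag(A) = (1,1,1)` and
`X` strictly lower triangular, the layers `Ω₂, Ω₃` are invariant under
`H = {exp(sA+tX)}`, and whenever `Ω_b` is nonempty, `Σ_b` is a topological section for
the `H`-action on `Ω_b` (`b = 2, 3`). -/
theorem layers_invariant_and_sections
    (A X : Matrix (Fin 3) (Fin 3) ℝ) (hcomm : A * X = X * A)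
    (hAlow : ∀ i j : Fin 3, i < j → A i j = 0) (hAdiag : ∀ i : Fin 3, A i i = 1)
    (hXlow : ∀ i j : Fin 3, i ≤ j → X i j = 0) :
    (∀ p : ℝ × ℝ, ∀ v ∈ Om2 X, hEl A X p *ᵥ v ∈ Om2 X) ∧
    (∀ p : ℝ × ℝ, ∀ v ∈ Om3 X, hEl A X p *ᵥ v ∈ Om3 X) ∧
    ((Om2 X).Nonempty →
      ∃ e : ((ℝ × ℝ) × ↥(Sig2 X)) ≃ₜ ↥(Om2 X),
        ∀ (p : ℝ × ℝ) (c : ↥(Sig2 X)),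
          ((e (p, c) : ↥(Om2 X)) : Fin 3 → ℝ) = hEl A X p *ᵥ (c : Fin 3 → ℝ)) ∧
    ((Om3 X).Nonempty →
      ∃ e : ((ℝ × ℝ) × ↥(Sig3 X)) ≃ₜ ↥(Om3 X),
        ∀ (p : ℝ × ℝ) (c : ↥(Sig3 X)),
          ((e (p, c) : ↥(Om3 X)) : Fin 3 → ℝ) = hEl A X p *ᵥ (c : Fin 3 → ℝ)) := by
  have hX1 : ∀ u : Fin 3 → ℝ, (X *ᵥ u) 1 = X 1 0 * u 0 := by
    intro u
    simp [Matrix.mulVec, dotProduct, Fin.sum_univ_three, hXlow 1 1 (le_refl _),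
      hXlow 1 2 (by decide)]
  have hX2 : ∀ u : Fin 3 → ℝ, (X *ᵥ u) 2 = X 2 0 * u 0 + X 2 1 * u 1 := by
    intro u
    simp [Matrix.mulVec, dotProduct, Fin.sum_univ_three, hXlow 2 2 (le_refl _)]
  have hcp : X 2 1 * A 1 0 = A 2 1 * X 1 0 := by
    have h := congrFun (congrFun hcomm 2) 0
    simp [Matrix.mul_apply, Fin.sum_univ_three, hAdiag, hAlow 0 1 (by decide),
      hAlow 0 2 (by decide), hAlow 1 2 (by decide), hXlow 0 0 (le_refl _),
      hXlow 0 1 (by decide), hXlow 0 2 (by decide), hXlow 1 1 (le_refl _),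
      hXlow 1 2 (by decide), hXlow 2 2 (le_refl _)] at h
    linarith
  have gAEq : ∀ (p : ℝ × ℝ) (u : Fin 3 → ℝ), hEl A X p *ᵥ u = gAct A X p.1 p.2 u :=
    gAct_eq A X hAlow hAdiag hXlow
  -- invariance of Om2
  have inv2 : ∀ p : ℝ × ℝ, ∀ v ∈ Om2 X, hEl A X p *ᵥ v ∈ Om2 X := by
    intro p v hv
    have hv' : X 1 0 * v 0 ≠ 0 := by simp only [Om2, Set.mem_setOf_eq, hX1] at hv; exact hv
    rw [Om2, Set.mem_setOf_eq, gAEq, hX1]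
    show X 1 0 * (Real.exp p.1 * v 0) ≠ 0
    rw [show X 1 0 * (Real.exp p.1 * v 0) = Real.exp p.1 * (X 1 0 * v 0) by ring]
    exact mul_ne_zero (Real.exp_ne_zero _) hv'
  -- invariance of Om3
  have inv3 : ∀ p : ℝ × ℝ, ∀ v ∈ Om3 X, hEl A X p *ᵥ v ∈ Om3 X := by
    intro p v hv
    simp only [Om3, Set.mem_setOf_eq, hX1, hX2] at hv
    obtain ⟨h1, h2⟩ := hv
    rw [Om3, Set.mem_setOf_eq, gAEq, hX1, hX2]
    constructor
    · show X 1 0 * (Real.exp p.1 * v 0) = 0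
      rw [show X 1 0 * (Real.exp p.1 * v 0) = Real.exp p.1 * (X 1 0 * v 0) by ring, h1, mul_zero]
    · show X 2 0 * (Real.exp p.1 * v 0)
        + X 2 1 * (Real.exp p.1 * ((p.1 * A 1 0 + p.2 * X 1 0) * v 0 + v 1)) ≠ 0
      have key : X 2 0 * (Real.exp p.1 * v 0)
          + X 2 1 * (Real.exp p.1 * ((p.1 * A 1 0 + p.2 * X 1 0) * v 0 + v 1))
          = Real.exp p.1 * (X 2 0 * v 0 + X 2 1 * v 1) := by
        linear_combination (Real.exp p.1 * p.1 * v 0) * hcp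
          + (Real.exp p.1 * p.1 * A 2 1 + Real.exp p.1 * p.2 * X 2 1) * h1
      rw [key]
      exact mul_ne_zero (Real.exp_ne_zero _) h2
  refine ⟨inv2, inv3, ?_, ?_⟩
  · -- section for Om2
    intro hne
    obtain ⟨v₀, hv₀⟩ := hne
    simp only [Om2, Set.mem_setOf_eq, hX1] at hv₀
    have hwfact : ∀ w : ↥(Om2 X), X 1 0 * (w : Fin 3 → ℝ) 0 ≠ 0 := fun w => by
      have h := w.2
      simp only [Om2, Set.mem_setOf_eq, hX1] at h; exact h
    have hmemF : ∀ x : (ℝ × ℝ) × ↥(Sig2 X), gAct A X x.1.1 x.1.2 x.2.1 ∈ Om2 X := by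
      intro x
      have h := inv2 x.1 x.2.1 x.2.2.1
      rwa [gAEq] at h
    have hmemG : ∀ w : ↥(Om2 X),
        gInv A X (sg2s X w.1) (sg2t A X w.1) w.1 ∈ Sig2 X := by
      rintro ⟨w, hw⟩
      simp only [Om2, Set.mem_setOf_eq, hX1] at hw
      have hEeq : Real.exp (sg2s X w) = |X 1 0 * w 0| := Real.exp_log (abs_pos.mpr hw)
      have hEne : Real.exp (sg2s X w) ≠ 0 := Real.exp_ne_zero _
      simp only [Sig2, Om2, Set.mem_setOf_eq, hX1]
      refine ⟨?_, ?_, ?_⟩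
      · show X 1 0 * (w 0 / Real.exp (sg2s X w)) ≠ 0
        rw [← mul_div_assoc]
        exact div_ne_zero hw hEne
      · show (-((sg2s X w * A 1 0 + sg2t A X w * X 1 0) * w 0) + w 1)
          / Real.exp (sg2s X w) = 0
        rw [div_eq_zero_iff]
        left
        rw [sg2t]
        have hcan : (w 1 - sg2s X w * A 1 0 * w 0) / (X 1 0 * w 0) * X 1 0 * w 0
            = w 1 - sg2s X w * A 1 0 * w 0 := by rw [mul_assoc, div_mul_cancel₀ _ hw]
        linear_combination (-1 : ℝ) * hcan
      · show |X 1 0 * (w 0 / Real.exp (sg2s X w))| = 1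
        rw [← mul_div_assoc, abs_div, hEeq, abs_abs, div_self (abs_ne_zero.mpr hw)]
    refine ⟨Homeomorph.mk (Equiv.mk
        (fun x => ⟨gAct A X x.1.1 x.1.2 x.2.1, hmemF x⟩)
        (fun w => ((sg2s X w.1, sg2t A X w.1),
          ⟨gInv A X (sg2s X w.1) (sg2t A X w.1) w.1, hmemG w⟩))
        ?_ ?_) ?_ ?_, ?_⟩
    · -- left inverse
      rintro ⟨⟨s, t⟩, c, hc⟩
      simp only [Sig2, Om2, Set.mem_setOf_eq, hX1] at hc
      obtain ⟨hcO, hc1, hcabs⟩ := hc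
      have hw0 : X 1 0 * (gAct A X s t c) 0 = Real.exp s * (X 1 0 * c 0) := by
        show X 1 0 * (Real.exp s * c 0) = _
        ring
      have hs : sg2s X (gAct A X s t c) = s := by
        rw [sg2s, hw0, abs_mul, hcabs, mul_one, abs_of_pos (Real.exp_pos s), Real.log_exp]
      have ht : sg2t A X (gAct A X s t c) = t := by
        rw [sg2t, hs, div_eq_iff (by rw [hw0]; exact mul_ne_zero (Real.exp_ne_zero _) hcO)]
        show Real.exp s * ((s * A 1 0 + t * X 1 0) * c 0 + c 1)
          - s * A 1 0 * (Real.exp s * c 0) = t * (X 1 0 * (Real.exp s * c 0))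
        rw [hc1]
        ring
      refine Prod.ext (Prod.ext ?_ ?_) (Subtype.ext ?_) <;> simp only
      · exact hs
      · exact ht
      · rw [hs, ht, gInv_gAct]
    · -- right inverse
      rintro ⟨w, hw⟩
      exact Subtype.ext (gAct_gInv A X _ _ w)
    · -- continuity of toFun
      exact ((gAct_cont A X).comp
        (continuous_fst.prodMk (continuous_subtype_val.comp continuous_snd))).subtype_mk _
    · -- continuity of invFun
      have hsc : Continuous fun w : ↥(Om2 X) => sg2s X w.1 := by
        apply ContinuousOn.comp_continuous Real.continuousOn_log
          (continuous_abs.comp (continuous_const.mul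
            ((continuous_apply 0).comp continuous_subtype_val)))
        intro w
        simp only [Set.mem_compl_iff, Set.mem_singleton_iff]
        exact abs_ne_zero.mpr (hwfact w)
      have htc : Continuous fun w : ↥(Om2 X) => sg2t A X w.1 := by
        apply Continuous.div
        · exact ((continuous_apply 1).comp continuous_subtype_val).sub
            ((hsc.mul continuous_const).mul ((continuous_apply 0).comp continuous_subtype_val))
        · exact continuous_const.mul ((continuous_apply 0).comp continuous_subtype_val)
        · exact fun w => hwfact w
      exact (hsc.prodMk htc).prodMk
        (((gInv_cont A X).comp ((hsc.prodMk htc).prodMk continuous_subtype_val)).subtype_mk _)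
    · -- the equivariance property
      intro p c
      exact (gAEq p c.1).symm
  · -- section for Om3
    intro hne
    have hwfact : ∀ w : ↥(Om3 X),
        X 1 0 * (w : Fin 3 → ℝ) 0 = 0 ∧
        X 2 0 * (w : Fin 3 → ℝ) 0 + X 2 1 * (w : Fin 3 → ℝ) 1 ≠ 0 := fun w => by
      have h := w.2
      simp only [Om3, Set.mem_setOf_eq, hX1, hX2] at h; exact h
    have hmemF : ∀ x : (ℝ × ℝ) × ↥(Sig3 X), gAct A X x.1.1 x.1.2 x.2.1 ∈ Om3 X := by
      intro x
      have h := inv3 x.1 x.2.1 x.2.2.1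
      rwa [gAEq] at h
    have hmemG : ∀ w : ↥(Om3 X),
        gInv A X (sg3s X w.1) (sg3t A X w.1) w.1 ∈ Sig3 X := by
      rintro ⟨w, hw⟩
      simp only [Om3, Set.mem_setOf_eq, hX1, hX2] at hw
      obtain ⟨h1, h2⟩ := hw
      have hEeq : Real.exp (sg3s X w) = |X 2 0 * w 0 + X 2 1 * w 1| :=
        Real.exp_log (abs_pos.mpr h2)
      have hEne : Real.exp (sg3s X w) ≠ 0 := Real.exp_ne_zero _
      have heq : X 2 0 * (w 0 / Real.exp (sg3s X w))
          + X 2 1 * ((-((sg3s X w * A 1 0 + sg3t A X w * X 1 0) * w 0) + w 1)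
            / Real.exp (sg3s X w))
          = (X 2 0 * w 0 + X 2 1 * w 1) / Real.exp (sg3s X w) := by
        have hnum : X 2 0 * w 0
            + X 2 1 * (-((sg3s X w * A 1 0 + sg3t A X w * X 1 0) * w 0) + w 1)
            = X 2 0 * w 0 + X 2 1 * w 1 := by
          linear_combination (-(sg3s X w * w 0)) * hcp
            + (-(sg3s X w * A 2 1 + sg3t A X w * X 2 1)) * h1
        rw [← mul_div_assoc, ← mul_div_assoc, ← add_div, hnum]
      simp only [Sig3, Om3, Set.mem_setOf_eq, hX1, hX2]
      have htf : sg3t A X w * (X 2 0 * w 0 + X 2 1 * w 1)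
          = sg3s X w ^ 2 * A 1 0 * A 2 1 * w 0 / 2 - sg3s X w * A 2 0 * w 0
            - sg3s X w * A 2 1 * w 1 + w 2 := by
        rw [sg3t, div_mul_eq_mul_div, mul_div_assoc, div_self h2, mul_one]
      refine ⟨⟨?_, ?_⟩, ?_, ?_⟩
      · show X 1 0 * (w 0 / Real.exp (sg3s X w)) = 0
        rw [← mul_div_assoc, h1, zero_div]
      · show X 2 0 * (w 0 / Real.exp (sg3s X w))
          + X 2 1 * ((-((sg3s X w * A 1 0 + sg3t A X w * X 1 0) * w 0) + w 1)
            / Real.exp (sg3s X w)) ≠ 0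
        rw [heq]
        exact div_ne_zero h2 hEne
      · show (((sg3s X w * A 1 0 + sg3t A X w * X 1 0) * (sg3s X w * A 2 1 + sg3t A X w * X 2 1)
            / 2 - (sg3s X w * A 2 0 + sg3t A X w * X 2 0)) * w 0
            - (sg3s X w * A 2 1 + sg3t A X w * X 2 1) * w 1 + w 2) / Real.exp (sg3s X w) = 0
        rw [div_eq_zero_iff]
        left
        linear_combination (sg3s X w * sg3t A X w * w 0 / 2) * hcp
          + (sg3s X w * sg3t A X w * A 2 1 + sg3t A X w ^ 2 * X 2 1 / 2) * h1 - htf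
      · show |X 2 0 * (w 0 / Real.exp (sg3s X w))
          + X 2 1 * ((-((sg3s X w * A 1 0 + sg3t A X w * X 1 0) * w 0) + w 1)
            / Real.exp (sg3s X w))| = 1
        rw [heq, abs_div, hEeq, abs_abs, div_self (abs_ne_zero.mpr h2)]
    refine ⟨Homeomorph.mk (Equiv.mk
        (fun x => ⟨gAct A X x.1.1 x.1.2 x.2.1, hmemF x⟩)
        (fun w => ((sg3s X w.1, sg3t A X w.1),
          ⟨gInv A X (sg3s X w.1) (sg3t A X w.1) w.1, hmemG w⟩))
        ?_ ?_) ?_ ?_, ?_⟩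
    · -- left inverse
      rintro ⟨⟨s, t⟩, c, hc⟩
      simp only [Sig3, Om3, Set.mem_setOf_eq, hX1, hX2] at hc
      obtain ⟨hcO, hc2, hcabs⟩ := hc
      obtain ⟨h1c, h2c⟩ := hcO
      have hfw : X 2 0 * (gAct A X s t c) 0 + X 2 1 * (gAct A X s t c) 1
          = Real.exp s * (X 2 0 * c 0 + X 2 1 * c 1) := by
        show X 2 0 * (Real.exp s * c 0)
          + X 2 1 * (Real.exp s * ((s * A 1 0 + t * X 1 0) * c 0 + c 1)) = _
        linear_combination (Real.exp s * s * c 0) * hcp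
          + (Real.exp s * s * A 2 1 + Real.exp s * t * X 2 1) * h1c
      have hs : sg3s X (gAct A X s t c) = s := by
        rw [sg3s, hfw, abs_mul, hcabs, mul_one, abs_of_pos (Real.exp_pos s), Real.log_exp]
      have ht : sg3t A X (gAct A X s t c) = t := by
        rw [sg3t, hs, div_eq_iff (by rw [hfw]; exact mul_ne_zero (Real.exp_ne_zero _) h2c), hfw]
        show s ^ 2 * A 1 0 * A 2 1 * (Real.exp s * c 0) / 2
          - s * A 2 0 * (Real.exp s * c 0)
          - s * A 2 1 * (Real.exp s * ((s * A 1 0 + t * X 1 0) * c 0 + c 1))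
          + Real.exp s * ((s * A 2 0 + t * X 2 0
              + (s * A 1 0 + t * X 1 0) * (s * A 2 1 + t * X 2 1) / 2) * c 0
              + (s * A 2 1 + t * X 2 1) * c 1 + c 2)
          = t * (Real.exp s * (X 2 0 * c 0 + X 2 1 * c 1))
        linear_combination (Real.exp s * c 0 * s * t / 2) * hcp
          + (Real.exp s * t ^ 2 * X 2 1 / 2) * h1c + Real.exp s * hc2
      refine Prod.ext (Prod.ext ?_ ?_) (Subtype.ext ?_) <;> simp only
      · exact hs
      · exact ht
      · rw [hs, ht, gInv_gAct]
    · -- right inverse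
      rintro ⟨w, hw⟩
      exact Subtype.ext (gAct_gInv A X _ _ w)
    · exact ((gAct_cont A X).comp
        (continuous_fst.prodMk (continuous_subtype_val.comp continuous_snd))).subtype_mk _
    · have hsc : Continuous fun w : ↥(Om3 X) => sg3s X w.1 := by
        apply ContinuousOn.comp_continuous Real.continuousOn_log
          (continuous_abs.comp ((continuous_const.mul
            ((continuous_apply 0).comp continuous_subtype_val)).add
            (continuous_const.mul ((continuous_apply 1).comp continuous_subtype_val))))
        intro w
        simp only [Set.mem_compl_iff, Set.mem_singleton_iff]
        exact abs_ne_zero.mpr (hwfact w).2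
      have htc : Continuous fun w : ↥(Om3 X) => sg3t A X w.1 := by
        apply Continuous.div
        · have e0 : Continuous fun w : ↥(Om3 X) => w.1 0 :=
            (continuous_apply 0).comp continuous_subtype_val
          have e1 : Continuous fun w : ↥(Om3 X) => w.1 1 :=
            (continuous_apply 1).comp continuous_subtype_val
          have e2 : Continuous fun w : ↥(Om3 X) => w.1 2 :=
            (continuous_apply 2).comp continuous_subtype_val
          exact ((((hsc.pow 2).mul continuous_const).mul continuous_const).mul e0).div_const
            (2:ℝ) |>.sub (((hsc.mul continuous_const).mul e0)) |>.sub
            ((hsc.mul continuous_const).mul e1) |>.add e2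
        · exact (continuous_const.mul ((continuous_apply 0).comp continuous_subtype_val)).add
            (continuous_const.mul ((continuous_apply 1).comp continuous_subtype_val))
        · exact fun w => (hwfact w).2
      exact (hsc.prodMk htc).prodMk
        (((gInv_cont A X).comp ((hsc.prodMk htc).prodMk continuous_subtype_val)).subtype_mk _)
    · intro p c
      exact (gAEq p c.1).symm
end
end
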